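/- Let l ≥ 4 be an integer, let G ∈ 𝒢_l and let C be an odd hole of G. If there is a jump over C, then G contains a short jump over C or a local jump over C across one vertex. -/

import Mathlib

open SimpleGraph

variable {V : Type*}

/-- The set of internal vertices of a walk from `x` to `y`. -/
def wInterior {G : SimpleGraph V} {x y : V} (P : G.Walk x y) : Set V :=
  {a | a ∈ P.support ∧ a ≠ x ∧ a ≠ y}

/-- `P` is an induced path of `G`. -/
def IsInducedPath (G : SimpleGraph V) {x y : V} (P : G.Walk x y) : Prop :=
  P.IsPath ∧ ∀ a ∈ P.support, ∀ b ∈ P.support, G.Adj a b → s(a, b) ∈ P.edges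

/-- A hole of `G`: an induced cycle of length at least 4. -/
def IsHole (G : SimpleGraph V) {v : V} (w : G.Walk v v) : Prop :=
  w.IsCycle ∧ 4 ≤ w.length ∧
    ∀ a ∈ w.support, ∀ b ∈ w.support, G.Adj a b → s(a, b) ∈ w.edges

/-- An odd hole of `G`. -/
def IsOddHole (G : SimpleGraph V) {v : V} (w : G.Walk v v) : Prop :=
  IsHole G w ∧ Odd w.length

/-- `G` belongs to the family `𝒢ₗ`: it has girth `2l+1` and
no odd hole of length at least `2l+3`. -/
def MemGFam (G : SimpleGraph V) (l : ℕ) : Prop :=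
  G.girth = (2 * l + 1 : ℕ) ∧
    ∀ (v : V) (w : G.Walk v v), IsOddHole G w → w.length < 2 * l + 3

/-- `G` is `k`-vertex-critical. -/
def IsVertexCritical (G : SimpleGraph V) (k : ℕ) : Prop :=
  G.chromaticNumber = k ∧
    ∀ v : V, (G.induce {u | u ≠ v}).chromaticNumber < k

/-- `S` is a vertex cut of `G`: deleting `S` leaves a disconnected graph. -/
def IsVertexCut (G : SimpleGraph V) (S : Set V) : Prop :=
  ¬ (G.induce Sᶜ).Preconnected

/-- `G` has a `K2`-cut. -/
def HasK2Cut (G : SimpleGraph V) : Prop :=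
  ∃ u v : V, G.Adj u v ∧ IsVertexCut G {u, v}

/-- `G` has a `P3`-cut. -/
def HasP3Cut (G : SimpleGraph V) : Prop :=
  ∃ u v w : V, u ≠ w ∧ G.Adj u v ∧ G.Adj v w ∧ ¬ G.Adj u w ∧ IsVertexCut G {u, v, w}

/-- `G` has a 2-edge-cut: two edges whose removal disconnects the graph. -/
def Has2EdgeCut (G : SimpleGraph V) : Prop :=
  ∃ e f : Sym2 V, e ≠ f ∧ e ∈ G.edgeSet ∧ f ∈ G.edgeSet ∧
    ¬ (G.deleteEdges {e, f}).Preconnected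

/-- `Q1`, `Q2` are the two internally disjoint `(x,y)`-paths of the cycle `w`. -/
def ArcsOf (G : SimpleGraph V) {v x y : V} (w : G.Walk v v) (Q1 Q2 : G.Walk x y) : Prop :=
  x ∈ w.support ∧ y ∈ w.support ∧ x ≠ y ∧ Q1.IsPath ∧ Q2.IsPath ∧
    ({a | a ∈ Q1.support} ∩ {a | a ∈ Q2.support} = {x, y}) ∧
    ({e | e ∈ w.edges} = {e | e ∈ Q1.edges} ∪ {e | e ∈ Q2.edges})

/-- `P` is a chordal path of the hole `w`: `w ∪ P` is an induced theta-subgraph of `G`. -/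
def IsChordalPath (G : SimpleGraph V) {v x y : V} (w : G.Walk v v) (P : G.Walk x y) : Prop :=
  IsHole G w ∧ P.IsPath ∧ 2 ≤ P.length ∧ x ∈ w.support ∧ y ∈ w.support ∧ x ≠ y ∧
    (∀ a ∈ wInterior P, a ∉ w.support) ∧
    (∀ a, (a ∈ w.support ∨ a ∈ P.support) → ∀ b, (b ∈ w.support ∨ b ∈ P.support) →
      G.Adj a b → (s(a, b) ∈ w.edges ∨ s(a, b) ∈ P.edges))

/-- `P` is an `(s,t)`-jump over the hole `w`. -/
def IsJump (G : SimpleGraph V) {v s t : V} (w : G.Walk v v) (P : G.Walk s t) : Prop :=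
  IsHole G w ∧ s ∈ w.support ∧ t ∈ w.support ∧ s ≠ t ∧ ¬ G.Adj s t ∧
    IsInducedPath G P ∧ ∀ a ∈ wInterior P, a ∉ w.support

/-- `P` is a local jump over `w` across the interior of the arc `Q1`
(`Q1`, `Q2` being the two arcs of `w` between the ends of `P`). -/
def IsLocalJumpAcross (G : SimpleGraph V) {v s t : V} (w : G.Walk v v)
    (P Q1 Q2 : G.Walk s t) : Prop :=
  IsJump G w P ∧ ArcsOf G w Q1 Q2 ∧
    (∃ a ∈ wInterior Q1, ∃ b ∈ wInterior P, G.Adj a b) ∧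
    (∀ a ∈ wInterior Q2, ∀ b ∈ wInterior P, ¬ G.Adj a b)

/-- `P` is a local jump over `w`. -/
def IsLocalJump (G : SimpleGraph V) {v s t : V} (w : G.Walk v v) (P : G.Walk s t) : Prop :=
  ∃ Q1 Q2 : G.Walk s t, IsLocalJumpAcross G w P Q1 Q2

/-- `P` is a local jump over `w` across one vertex. -/
def IsLocalJumpAcrossOne (G : SimpleGraph V) {v s t : V} (w : G.Walk v v)
    (P : G.Walk s t) : Prop :=
  ∃ Q1 Q2 : G.Walk s t, IsLocalJumpAcross G w P Q1 Q2 ∧ Q1.length = 2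

/-- `P` is a short jump over `w`: no internal vertex of either arc of `w`
has a neighbour among the internal vertices of `P`. -/
def IsShortJump (G : SimpleGraph V) {v s t : V} (w : G.Walk v v) (P : G.Walk s t) : Prop :=
  IsJump G w P ∧
    ∀ a ∈ w.support, a ≠ s → a ≠ t → ∀ b ∈ wInterior P, ¬ G.Adj a b

/-- `P` is a short jump over `w` across the interior of `Q1`, i.e. `P ∪ Q1` is an
odd hole (a jump hole over `w`). -/
def IsShortJumpAcross (G : SimpleGraph V) {v s t : V} (w : G.Walk v v)
    (P Q1 Q2 : G.Walk s t) : Prop :=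
  IsShortJump G w P ∧ ArcsOf G w Q1 Q2 ∧ IsOddHole G (P.append Q1.reverse)

/-- `x` lies in some jump hole over `w`. -/
def InJumpHoleOver (G : SimpleGraph V) {v : V} (w : G.Walk v v) (x : V) : Prop :=
  ∃ (s t : V) (P Q1 Q2 : G.Walk s t),
    IsShortJumpAcross G w P Q1 Q2 ∧ (x ∈ P.support ∨ x ∈ Q1.support)

/-- `a`, `b`, `c`, `d` appear on the cycle `w` in this cyclic order. -/
def CyclicOrder4 (G : SimpleGraph V) {v : V} (w : G.Walk v v) (a b c d : V) : Prop :=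
  ∃ n : ℕ, List.Sublist [a, b, c, d] (w.support.tail.rotate n)

/-- A `K4`-subdivision in `G`: four distinct branch vertices joined by six
internally disjoint paths (the arrises). -/
structure K4Sub (G : SimpleGraph V) where
  u1 : V
  u2 : V
  u3 : V
  u4 : V
  P1 : G.Walk u1 u2
  P2 : G.Walk u3 u4
  Q1 : G.Walk u2 u3
  Q2 : G.Walk u1 u4
  L1 : G.Walk u1 u3
  L2 : G.Walk u2 u4
  hu : List.Nodup [u1, u2, u3, u4]
  hP1 : P1.IsPath
  hP2 : P2.IsPath
  hQ1 : Q1.IsPath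
  hQ2 : Q2.IsPath
  hL1 : L1.IsPath
  hL2 : L2.IsPath
  hP : ∀ a ∈ P1.support, a ∉ P2.support
  hQ : ∀ a ∈ Q1.support, a ∉ Q2.support
  hL : ∀ a ∈ L1.support, a ∉ L2.support

namespace K4Sub

variable {G : SimpleGraph V}

/-- The face cycle `C1 = P1 ∪ Q1 ∪ L1`. -/
def C1 (H : K4Sub G) : G.Walk H.u1 H.u1 := (H.P1.append H.Q1).append H.L1.reverse
/-- The face cycle `C2 = P1 ∪ Q2 ∪ L2`. -/
def C2 (H : K4Sub G) : G.Walk H.u1 H.u1 := (H.P1.append H.L2).append H.Q2.reverse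
/-- The face cycle `C3 = P2 ∪ Q1 ∪ L2`. -/
def C3 (H : K4Sub G) : G.Walk H.u2 H.u2 := (H.Q1.append H.P2).append H.L2.reverse
/-- The face cycle `C4 = C1 △ C2 △ C3 = P2 ∪ Q2 ∪ L1`. -/
def C4 (H : K4Sub G) : G.Walk H.u1 H.u1 := (H.L1.append H.P2).append H.Q2.reverse

/-- The vertex set of the subdivision. -/
def verts (H : K4Sub G) : Set V :=
  {a | a ∈ H.P1.support ∨ a ∈ H.P2.support ∨ a ∈ H.Q1.support ∨
       a ∈ H.Q2.support ∨ a ∈ H.L1.support ∨ a ∈ H.L2.support}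

/-- The edge set of the subdivision. -/
def edges (H : K4Sub G) : Set (Sym2 V) :=
  {e | e ∈ H.P1.edges ∨ e ∈ H.P2.edges ∨ e ∈ H.Q1.edges ∨
       e ∈ H.Q2.edges ∨ e ∈ H.L1.edges ∨ e ∈ H.L2.edges}

end K4Sub

/-- `H` is an odd `K4`-subdivision: all four face cycles are odd holes. -/
def IsOddK4 (G : SimpleGraph V) (H : K4Sub G) : Prop :=
  IsOddHole G H.C1 ∧ IsOddHole G H.C2 ∧ IsOddHole G H.C3 ∧ IsOddHole G H.C4

/-- `G` has an odd `K4`-subdivision. -/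
def HasOddK4 (G : SimpleGraph V) : Prop := ∃ H : K4Sub G, IsOddK4 G H

/-- `H` is a balanced `K4`-subdivision of type `(1,2)`. -/
def IsBalancedK4 (G : SimpleGraph V) (H : K4Sub G) : Prop :=
  IsOddHole G H.C1 ∧ IsOddHole G H.C2 ∧
    IsHole G H.C3 ∧ Even H.C3.length ∧ IsHole G H.C4 ∧ Even H.C4.length ∧
    H.Q1.length = 1 ∧ 2 ≤ H.L2.length

/-- `G` contains a balanced `K4`-subdivision of type `(1,2)`. -/
def HasBalancedK4 (G : SimpleGraph V) : Prop := ∃ H : K4Sub G, IsBalancedK4 G H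

/-- `P` is a direct connection linking the (vertex sets of) two disjoint induced
subgraphs `S1` and `S2`. -/
def IsDirectConnection (G : SimpleGraph V) (S1 S2 : Set V) {v1 v2 : V}
    (P : G.Walk v1 v2) : Prop :=
  IsInducedPath G P ∧ (∀ x ∈ P.support, x ∉ S1 ∧ x ∉ S2) ∧
    (∃ y ∈ S1, G.Adj v1 y) ∧ (∃ y ∈ S2, G.Adj v2 y) ∧
    (∀ x ∈ P.support, (∃ y ∈ S1, G.Adj x y) → x = v1) ∧
    (∀ x ∈ P.support, (∃ y ∈ S2, G.Adj x y) → x = v2)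

/-- `P` is a minimal direct connection linking `S1` and `S2`. -/
def IsMinimalDirectConnection (G : SimpleGraph V) (S1 S2 : Set V) {v1 v2 : V}
    (P : G.Walk v1 v2) : Prop :=
  IsDirectConnection G S1 S2 P ∧
    ∀ (w1 w2 : V) (P' : G.Walk w1 w2), IsDirectConnection G S1 S2 P' →
      (∀ x ∈ P'.support, x ∈ P.support) → ∀ x ∈ P.support, x ∈ P'.support


/-! ### Auxiliary lemmas for the proof -/

section AuxWalk

open SimpleGraph Walk

variable {G : SimpleGraph V}

namespace SimpleGraph.Walk

lemma endpoints_eq_of_length_zero {x y : V} (p : G.Walk x y) (h : p.length = 0) : x = y := by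
  cases p with
  | nil => rfl
  | cons h q => simp at h

lemma adj_of_length_one {x y : V} (p : G.Walk x y) (h : p.length = 1) : G.Adj x y := by
  cases p with
  | nil => simp at h
  | cons hadj q =>
    have h0 : q.length = 0 := by simpa using h
    have := endpoints_eq_of_length_zero q h0
    rwa [this] at hadj

lemma getVert_eq_support_getElem' {u v : V} (p : G.Walk u v) {i : ℕ} (hi : i ≤ p.length) :
    p.getVert i = p.support[i]'(by rw [length_support]; omega) := by
  induction p generalizing i with
  | nil =>
    simp only [length_nil, Nat.le_zero] at hi
    subst hi; simp
  | cons h q ih =>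
    cases i with
    | zero => simp
    | succ n =>
      rw [getVert_cons_succ]
      simp only [support_cons, List.getElem_cons_succ]
      exact ih (by simpa using hi)

lemma IsPath.getVert_inj {u v : V} {p : G.Walk u v} (hp : p.IsPath) {i j : ℕ}
    (hi : i ≤ p.length) (hj : j ≤ p.length) (h : p.getVert i = p.getVert j) : i = j := by
  rw [getVert_eq_support_getElem' _ hi, getVert_eq_support_getElem' _ hj] at h
  exact (hp.support_nodup.getElem_inj_iff).mp h

lemma isCycle_concat {x y : V} {W : G.Walk x y} (hW : W.IsPath) (h : G.Adj y x)
    (he : s(y, x) ∉ W.edges) : (W.concat h).IsCycle := by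
  rw [isCycle_def]
  refine ⟨⟨?_⟩, W.concat_ne_nil h, ?_⟩
  · rw [edges_concat]
    simp [List.concat_eq_append, List.nodup_append, hW.isTrail.edges_nodup, he]
    intro a ha hc; exact he (hc ▸ ha)
  · rw [support_concat]
    have hnd := hW.support_nodup
    rw [W.support_eq_cons, List.nodup_cons] at hnd
    rw [W.support_eq_cons]
    simp [List.concat_eq_append, List.nodup_append, hnd.1, hnd.2]
    intro a ha hc; exact hnd.1 (hc ▸ ha)

lemma first_edge {x y z : V} {W : G.Walk x y} (hW : W.IsPath) (he : s(x, z) ∈ W.edges) :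
    W.getVert 1 = z := by
  cases W with
  | nil => simp at he
  | @cons _ u _ hadj q =>
    rw [cons_isPath_iff] at hW
    rw [edges_cons] at he
    rcases List.mem_cons.mp he with he | he
    · rcases Sym2.eq_iff.mp he with ⟨-, rfl⟩ | ⟨hxu, -⟩
      · simp [getVert_cons_succ]
      · exact absurd hxu hadj.ne
    · exact absurd (q.fst_mem_support_of_mem_edges he) hW.2

lemma start_mem_support_tail {x : V} (w : G.Walk x x) (hnil : w ≠ nil) :
    x ∈ w.support.tail := by
  cases w with
  | nil => exact absurd rfl hnil
  | cons h q => simpa using q.end_mem_support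

variable [DecidableEq V]

lemma takeUntil_start {u v : V} (p : G.Walk u v) (h : u ∈ p.support) :
    p.takeUntil u h = nil := by
  cases p with
  | nil => rfl
  | cons hadj q => simp [takeUntil]

lemma takeUntil_append {u v x a : V} (p : G.Walk u v) (q : G.Walk v x) (ha : a ∈ p.support)
    (ha' : a ∈ (p.append q).support) :
    (p.append q).takeUntil a ha' = p.takeUntil a ha := by
  induction p with
  | nil =>
    rw [mem_support_nil_iff] at ha
    subst ha
    simp [takeUntil_start]
  | @cons b c _ hadj p ih =>
    by_cases hu : b = a
    · subst hu
      simp [takeUntil_start, cons_append]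
    · rw [support_cons, List.mem_cons] at ha
      rcases ha with ha | ha
      · exact absurd ha.symm hu
      · simp only [cons_append, takeUntil, dif_neg hu]
        rw [ih q ha]

lemma length_takeUntil_add {u v a : V} (p : G.Walk u v) (h : a ∈ p.support) :
    (p.takeUntil a h).length + (p.dropUntil a h).length = p.length := by
  have := congr_arg Walk.length (p.take_spec h)
  rwa [length_append] at this

lemma support_take_drop {u v a : V} (p : G.Walk u v) (h : a ∈ p.support) :
    p.support = (p.takeUntil a h).support ++ (p.dropUntil a h).support.tail := by
  conv_lhs => rw [← p.take_spec h]
  rw [support_append]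

lemma IsPath.eq_of_mem_take_drop {u v a x : V} {p : G.Walk u v} (hp : p.IsPath)
    (h : a ∈ p.support) (hx1 : x ∈ (p.takeUntil a h).support)
    (hx2 : x ∈ (p.dropUntil a h).support) : x = a := by
  have hnd := hp.support_nodup
  rw [support_take_drop p h, List.nodup_append] at hnd
  rcases List.mem_cons.mp (((p.dropUntil a h).support_eq_cons ▸ hx2)) with rfl | hx2'
  · rfl
  · exact absurd rfl (hnd.2.2 x hx1 x hx2')

lemma IsPath.end_not_mem_takeUntil {u v a : V} {p : G.Walk u v} (hp : p.IsPath)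
    (h : a ∈ p.support) (hav : a ≠ v) : v ∉ (p.takeUntil a h).support := by
  intro hv
  exact hav (hp.eq_of_mem_take_drop h hv (end_mem_support _)).symm

lemma IsPath.edge_mem_takeUntil {u v a x y : V} {p : G.Walk u v} (hp : p.IsPath)
    (h : a ∈ p.support) (hx : x ∈ (p.takeUntil a h).support)
    (hy : y ∈ (p.takeUntil a h).support) (hxy : x ≠ y) (he : s(x, y) ∈ p.edges) :
    s(x, y) ∈ (p.takeUntil a h).edges := by
  have hsplit : p.edges = (p.takeUntil a h).edges ++ (p.dropUntil a h).edges := by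
    conv_lhs => rw [← p.take_spec h]
    rw [edges_append]
  rw [hsplit, List.mem_append] at he
  rcases he with he | he
  · exact he
  · exfalso
    have hx' : x ∈ (p.dropUntil a h).support := fst_mem_support_of_mem_edges _ he
    have hy' : y ∈ (p.dropUntil a h).support := snd_mem_support_of_mem_edges _ he
    have e1 := hp.eq_of_mem_take_drop h hx hx'
    have e2 := hp.eq_of_mem_take_drop h hy hy'
    exact hxy (by rw [e1, e2])

lemma takeUntil_congr {u v a : V} {p q : G.Walk u v} (hpq : p = q) (hp : a ∈ p.support) :
    p.takeUntil a hp = q.takeUntil a (hpq ▸ hp) := by subst hpq; rfl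

lemma length_takeUntil_lt_of_mem {u v a x : V} (p : G.Walk u v) (h : a ∈ p.support)
    (hxT : x ∈ (p.takeUntil a h).support) (hxa : x ≠ a) (hxp : x ∈ p.support) :
    (p.takeUntil x hxp).length < (p.takeUntil a h).length := by
  have hTD : (p.takeUntil a h).append (p.dropUntil a h) = p := p.take_spec h
  have h1 : p.takeUntil x hxp =
      ((p.takeUntil a h).append (p.dropUntil a h)).takeUntil x (hTD.symm ▸ hxp) :=
    takeUntil_congr hTD.symm hxp
  rw [h1, takeUntil_append _ _ hxT]
  have h2 := (p.takeUntil a h).length_takeUntil_add hxT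
  have h3 : ((p.takeUntil a h).dropUntil x hxT).length ≠ 0 := by
    intro hc
    exact hxa (endpoints_eq_of_length_zero _ hc)
  omega

lemma getVert_length_takeUntil' {u v a : V} (p : G.Walk u v) (h : a ∈ p.support) :
    p.getVert ((p.takeUntil a h).length) = a := by
  obtain ⟨n, hn⟩ : ∃ n, (p.takeUntil a h).length = n := ⟨_, rfl⟩
  rw [hn]
  conv_lhs => rw [← p.take_spec h]
  rw [getVert_append, hn, if_neg (lt_irrefl n), Nat.sub_self, getVert_zero]

end SimpleGraph.Walk

open SimpleGraph.Walk

/-- Splitting a cycle at two distinct vertices into two internally disjoint paths. -/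
lemma cycle_split [DecidableEq V] {v : V} (w : G.Walk v v) (hw : w.IsCycle) {s t : V}
    (hs : s ∈ w.support) (ht : t ∈ w.support) (hst : s ≠ t) :
    ∃ (Q1 Q2 : G.Walk s t), Q1.IsPath ∧ Q2.IsPath ∧
      ({a | a ∈ Q1.support} ∩ {a | a ∈ Q2.support} = {s, t}) ∧
      ({e | e ∈ w.edges} = {e | e ∈ Q1.edges} ∪ {e | e ∈ Q2.edges}) ∧
      Q1.length + Q2.length = w.length ∧
      (∀ x ∈ Q1.support, x ∈ w.support) ∧ (∀ x ∈ Q2.support, x ∈ w.support) := by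
  set w' := w.rotate s hs with hw'def
  have hw' : w'.IsCycle := hw.rotate hs
  have hrot : w'.support.tail ~r w.support.tail := support_rotate w s hs
  have hvtail : v ∈ w.support.tail := w.start_mem_support_tail hw.ne_nil
  have hstail : s ∈ w.support.tail ∨ s = v := by
    have := hs
    rw [w.support_eq_cons, List.mem_cons] at this
    tauto
  have hsupmem : ∀ x, x ∈ w'.support ↔ x ∈ w.support := by
    intro x
    rw [w'.support_eq_cons, w.support_eq_cons]
    simp only [List.mem_cons, hrot.perm.mem_iff]
    constructor
    · rintro (rfl | h)
      · rcases hstail with h | rfl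
        · exact Or.inr h
        · exact Or.inl rfl
      · exact Or.inr h
    · rintro (rfl | h)
      · exact Or.inr hvtail
      · exact Or.inr h
  have ht' : t ∈ w'.support := (hsupmem t).mpr ht
  set A1 := w'.takeUntil t ht' with hA1
  set A2 := w'.dropUntil t ht' with hA2
  have hspec : A1.append A2 = w' := w'.take_spec ht'
  have hsupp : w'.support = A1.support ++ A2.support.tail := support_take_drop w' ht'
  have hndt : w'.support.tail.Nodup := ((isCycle_def _).mp hw').2.2
  have htails : w'.support.tail = A1.support.tail ++ A2.support.tail := by
    rw [hsupp, A1.support_eq_cons]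
    rfl
  rw [htails, List.nodup_append] at hndt
  have hsA2 : s ∈ A2.support.tail := by
    have : s ∈ A2.support := A2.end_mem_support
    rw [A2.support_eq_cons, List.mem_cons] at this
    rcases this with h | h
    · exact absurd h hst
    · exact h
  have htA1 : t ∈ A1.support.tail := by
    have : t ∈ A1.support := A1.end_mem_support
    rw [A1.support_eq_cons, List.mem_cons] at this
    rcases this with h | h
    · exact absurd h hst.symm
    · exact h
  have hA1path : A1.IsPath := by
    rw [isPath_def, A1.support_eq_cons, List.nodup_cons]
    refine ⟨fun hc => hndt.2.2 s hc s hsA2 rfl, hndt.1⟩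
  have hA2path : A2.IsPath := by
    rw [isPath_def, A2.support_eq_cons, List.nodup_cons]
    refine ⟨fun hc => hndt.2.2 t htA1 t hc rfl, hndt.2.1⟩
  refine ⟨A1, A2.reverse, hA1path, hA2path.reverse, ?_, ?_, ?_, ?_, ?_⟩
  · ext x
    simp only [Set.mem_inter_iff, Set.mem_setOf_eq, support_reverse, List.mem_reverse,
      Set.mem_insert_iff, Set.mem_singleton_iff]
    constructor
    · rintro ⟨h1, h2⟩
      rw [A1.support_eq_cons, List.mem_cons] at h1
      rcases h1 with rfl | h1
      · exact Or.inl rfl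
      rw [A2.support_eq_cons, List.mem_cons] at h2
      rcases h2 with rfl | h2
      · exact Or.inr rfl
      · exact absurd rfl (hndt.2.2 x h1 x h2)
    · rintro (rfl | rfl)
      · exact ⟨A1.start_mem_support, A2.end_mem_support⟩
      · exact ⟨A1.end_mem_support, A2.start_mem_support⟩
  · ext e
    have hperm : w'.edges.Perm w.edges := (rotate_edges w s hs).perm
    have hedges : w'.edges = A1.edges ++ A2.edges := by
      conv_lhs => rw [← hspec]
      rw [edges_append]
    simp only [Set.mem_setOf_eq, Set.mem_union, ← hperm.mem_iff, hedges, List.mem_append,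
      edges_reverse, List.mem_reverse]
  · have h1 : A1.length + A2.length = w'.length := length_takeUntil_add w' ht'
    have h2 : w'.length = w.length := by
      rw [hw'def]
      unfold Walk.rotate
      rw [length_append]
      have := length_takeUntil_add w hs
      omega
    rw [length_reverse]
    omega
  · intro x hx
    exact (hsupmem x).mp (support_takeUntil_subset w' ht' hx)
  · intro x hx
    rw [support_reverse, List.mem_reverse] at hx
    exact (hsupmem x).mp (support_dropUntil_subset w' ht' hx)

end AuxWalk


section AuxJump

open SimpleGraph SimpleGraph.Walk

variable {G : SimpleGraph V}

lemma mem_wInterior_reverse {s t x : V} {P : G.Walk s t} :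
    x ∈ wInterior P.reverse ↔ x ∈ wInterior P := by
  constructor
  · rintro ⟨h1, h2, h3⟩
    rw [Walk.support_reverse, List.mem_reverse] at h1
    exact ⟨h1, h3, h2⟩
  · rintro ⟨h1, h2, h3⟩
    refine ⟨?_, h3, h2⟩
    rw [Walk.support_reverse, List.mem_reverse]
    exact h1

lemma IsJump.reverse {v s t : V} {w : G.Walk v v} {P : G.Walk s t} (h : IsJump G w P) :
    IsJump G w P.reverse := by
  obtain ⟨hhole, hsw, htw, hst, hnadj, ⟨hpath, hind⟩, hint⟩ := h
  refine ⟨hhole, htw, hsw, hst.symm, fun hadj => hnadj hadj.symm, ⟨hpath.reverse, ?_⟩, ?_⟩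
  · intro a ha b hb hab
    rw [Walk.support_reverse, List.mem_reverse] at ha hb
    rw [Walk.edges_reverse, List.mem_reverse]
    exact hind a ha b hb hab
  · intro x hx
    exact hint x (mem_wInterior_reverse.mp hx)

/-- There is no triangle in a graph of large girth. -/
lemma no_triangle {l : ℕ}
    (hgirth : ∀ (x : V) (cW : G.Walk x x), cW.IsCycle → 2 * l + 1 ≤ cW.length) (hl : 4 ≤ l)
    {a b c : V} (h1 : G.Adj a b) (h2 : G.Adj b c) (h3 : G.Adj c a) : False := by
  set W : G.Walk a c := Walk.cons h1 (Walk.cons h2 Walk.nil) with hW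
  have hWpath : W.IsPath := by
    rw [Walk.isPath_def, hW]
    simp only [Walk.support_cons, Walk.support_nil, List.nodup_cons, List.mem_cons,
      List.mem_singleton, List.not_mem_nil, not_false_iff, and_true, List.nodup_nil,
      List.not_mem_nil, or_false]
    refine ⟨?_, h2.ne⟩
    push_neg
    exact ⟨h1.ne, fun h => h3.ne' h⟩
  have he : s(c, a) ∉ W.edges := by
    rw [hW]
    simp only [Walk.edges_cons, Walk.edges_nil, List.mem_cons, List.not_mem_nil, or_false]
    rintro (h | h)
    · rcases Sym2.eq_iff.mp h with ⟨rfl, -⟩ | ⟨rfl, -⟩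
      · exact h3.ne rfl
      · exact h2.ne rfl
    · rcases Sym2.eq_iff.mp h with ⟨rfl, -⟩ | ⟨-, rfl⟩
      · exact h2.ne rfl
      · exact h1.ne rfl
  have hcyc := isCycle_concat hWpath h3 he
  have hlen : (W.concat h3).length = 3 := by
    rw [Walk.length_concat, hW]
    simp
  have := hgirth a (W.concat h3) hcyc
  omega

/-- There is no 4-cycle in a graph of large girth. -/
lemma no_square {l : ℕ}
    (hgirth : ∀ (x : V) (cW : G.Walk x x), cW.IsCycle → 2 * l + 1 ≤ cW.length) (hl : 4 ≤ l)
    {s c t c' : V} (h1 : G.Adj s c) (h2 : G.Adj c t) (h3 : G.Adj t c') (h4 : G.Adj c' s)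
    (hst : s ≠ t) (hcc : c ≠ c') : False := by
  set W : G.Walk s c' := Walk.cons h1 (Walk.cons h2 (Walk.cons h3 Walk.nil)) with hW
  have hWpath : W.IsPath := by
    rw [Walk.isPath_def, hW]
    simp only [Walk.support_cons, Walk.support_nil, List.nodup_cons, List.mem_cons,
      List.mem_singleton, List.not_mem_nil, not_false_iff, and_true, List.nodup_nil, or_false]
    push_neg
    refine ⟨⟨h1.ne, hst, fun h => h4.ne' h⟩, ⟨h2.ne, hcc⟩, h3.ne⟩
  have he : s(c', s) ∉ W.edges := by
    rw [hW]
    simp only [Walk.edges_cons, Walk.edges_nil, List.mem_cons, List.not_mem_nil, or_false]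
    rintro (h | h | h)
    · rcases Sym2.eq_iff.mp h with ⟨rfl, -⟩ | ⟨h', -⟩
      · exact h4.ne rfl
      · exact hcc h'.symm
    · rcases Sym2.eq_iff.mp h with ⟨h', -⟩ | ⟨rfl, -⟩
      · exact hcc h'.symm
      · exact h3.ne rfl
    · rcases Sym2.eq_iff.mp h with ⟨rfl, -⟩ | ⟨-, h'⟩
      · exact h3.ne rfl
      · exact hst h'
  have hcyc := isCycle_concat hWpath h4 he
  have hlen : (W.concat h4).length = 4 := by
    rw [Walk.length_concat, hW]
    simp
  have := hgirth s (W.concat h4) hcyc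
  omega

/-- A vertex outside a short odd cycle cannot be adjacent to two distinct vertices of it. -/
lemma no_common_neighbor [DecidableEq V] {l : ℕ}
    (hgirth : ∀ (x : V) (cW : G.Walk x x), cW.IsCycle → 2 * l + 1 ≤ cW.length) (hl : 4 ≤ l)
    {v : V} {w : G.Walk v v} (hwc : w.IsCycle) (hwlen : w.length < 2 * l + 3)
    {s t b : V} (hs : s ∈ w.support) (ht : t ∈ w.support) (hst : s ≠ t)
    (hbw : b ∉ w.support) (h1 : G.Adj b s) (h2 : G.Adj b t) : False := by
  obtain ⟨Q1, Q2, hp1, hp2, -, -, hsum, hs1, hs2⟩ := cycle_split w hwc hs ht hst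
  have key : ∀ Q : G.Walk s t, Q.IsPath → (∀ x ∈ Q.support, x ∈ w.support) →
      2 * l + 1 ≤ Q.length + 2 := by
    intro Q hQ hsub
    have hbQ : b ∉ Q.support := fun h => hbw (hsub _ h)
    set W : G.Walk b t := Walk.cons h1 Q with hW
    have hWpath : W.IsPath := hQ.cons hbQ
    have hne : s(t, b) ∉ W.edges := by
      rw [hW, Walk.edges_cons]
      intro hmem
      rcases List.mem_cons.mp hmem with hmem | hmem
      · rcases Sym2.eq_iff.mp hmem with ⟨-, rfl⟩ | ⟨rfl, -⟩
        · exact h1.ne rfl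
        · exact hst rfl
      · exact hbQ (Q.snd_mem_support_of_mem_edges hmem)
    have hcyc := isCycle_concat hWpath h2.symm hne
    have hlen : (W.concat h2.symm).length = Q.length + 2 := by
      rw [Walk.length_concat, hW, Walk.length_cons]
    have := hgirth b (W.concat h2.symm) hcyc
    omega
  have k1 := key Q1 hp1 hs1
  have k2 := key Q2 hp2 hs2
  omega

/-- Key minimality lemma: if `c` is nonadjacent to `s` and has a neighbour in the interior
of a minimum-length jump `P`, then this neighbour is unique and adjacent to `t`. -/
lemma minimal_jump_attach [DecidableEq V] {v s t : V} {w : G.Walk v v} {P : G.Walk s t}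
    (hP : IsJump G w P)
    (hmin : ∀ (s' t' : V) (J : G.Walk s' t'), IsJump G w J → P.length ≤ J.length)
    {c : V} (hc : c ∈ w.support) (hcs : c ≠ s) (hct : c ≠ t) (hcsadj : ¬ G.Adj c s)
    {b0 : V} (hb0 : b0 ∈ wInterior P) (hadj0 : G.Adj c b0) :
    ∃ b ∈ wInterior P, G.Adj c b ∧ G.Adj b t ∧ ∀ b' ∈ wInterior P, G.Adj c b' → b' = b := by
  obtain ⟨hhole, hsw, htw, hst, hnadj, ⟨hpath, hind⟩, hint⟩ := hP
  have hcP : c ∉ P.support := fun hcP => (hint c ⟨hcP, hcs, hct⟩) hc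
  set S : Set ℕ := {n | ∃ b, ∃ hb : b ∈ P.support,
    b ∈ wInterior P ∧ G.Adj c b ∧ (P.takeUntil b hb).length = n} with hS
  have hSne : S.Nonempty := ⟨_, b0, hb0.1, hb0, hadj0, rfl⟩
  obtain ⟨b, hbP, hbint, hcb, hblen⟩ := Nat.sInf_mem hSne
  have hearly : ∀ x ∈ (P.takeUntil b hbP).support, x ≠ s → x ≠ b → ¬ G.Adj c x := by
    intro x hx hxs hxb hadjx
    have hxP : x ∈ P.support := P.support_takeUntil_subset hbP hx
    have hxt : x ≠ t := by
      rintro rfl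
      exact hpath.end_not_mem_takeUntil hbP hbint.2.2 hx
    have hlt : (P.takeUntil x hxP).length < (P.takeUntil b hbP).length :=
      P.length_takeUntil_lt_of_mem hbP hx hxb hxP
    have hmem : (P.takeUntil x hxP).length ∈ S := ⟨x, hxP, ⟨hxP, hxs, hxt⟩, hadjx, rfl⟩
    have := Nat.sInf_le hmem
    omega
  have hcT : c ∉ (P.takeUntil b hbP).support := fun h => hcP (P.support_takeUntil_subset hbP h)
  set J : G.Walk s c := (P.takeUntil b hbP).concat hcb.symm with hJ
  have hJsup : J.support = (P.takeUntil b hbP).support ++ [c] := by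
    rw [hJ, Walk.support_concat]
  have hTpath : (P.takeUntil b hbP).IsPath := hpath.takeUntil hbP
  have hJpath : J.IsPath := by
    rw [Walk.isPath_def, hJsup, List.nodup_append]
    refine ⟨hTpath.support_nodup, List.nodup_singleton c, ?_⟩
    intro a ha b' hb'
    rw [List.mem_singleton] at hb'
    subst hb'
    exact fun h => hcT (h ▸ ha)
  have hJedges : J.edges = (P.takeUntil b hbP).edges ++ [s(b, c)] := by
    rw [hJ, Walk.edges_concat, List.concat_eq_append]
  have htT : t ∉ (P.takeUntil b hbP).support :=
    hpath.end_not_mem_takeUntil hbP hbint.2.2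
  have hJind : IsInducedPath G J := by
    refine ⟨hJpath, ?_⟩
    intro a ha b' hb' hab
    rw [hJsup, List.mem_append, List.mem_singleton] at ha hb'
    rcases ha with ha | rfl
    · rcases hb' with hb' | rfl
      · have hPe : s(a, b') ∈ P.edges :=
          hind a (P.support_takeUntil_subset hbP ha) b' (P.support_takeUntil_subset hbP hb') hab
        have := hpath.edge_mem_takeUntil hbP ha hb' hab.ne hPe
        rw [hJedges, List.mem_append]
        exact Or.inl this
      · have hab2 : a = b := by
          by_contra hne
          have has : a ≠ s := by rintro rfl; exact hcsadj hab.symm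
          exact hearly a ha has hne hab.symm
        subst hab2
        rw [hJedges]
        simp
    · rcases hb' with hb' | rfl
      · have hab2 : b' = b := by
          by_contra hne
          have hbs : b' ≠ s := by rintro rfl; exact hcsadj hab
          exact hearly b' hb' hbs hne hab
        subst hab2
        rw [hJedges]
        simp [Sym2.eq_swap]
      · exact absurd rfl hab.ne
  have hJjump : IsJump G w J := by
    refine ⟨hhole, hsw, hc, fun h => hcs h.symm, fun h => hcsadj h.symm, hJind, ?_⟩
    intro x hx
    obtain ⟨hxsup, hxs, hxc⟩ := hx
    rw [hJsup, List.mem_append, List.mem_singleton] at hxsup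
    rcases hxsup with hxT | rfl
    · have hxP : x ∈ P.support := P.support_takeUntil_subset hbP hxT
      have hxt : x ≠ t := by rintro rfl; exact htT hxT
      exact hint x ⟨hxP, hxs, hxt⟩
    · exact absurd rfl hxc
  have hminJ := hmin s c J hJjump
  have hJlen : J.length = (P.takeUntil b hbP).length + 1 := Walk.length_concat _ _
  have hdrop := P.length_takeUntil_add hbP
  have hdrop1 : (P.dropUntil b hbP).length ≠ 0 :=
    fun h0 => hbint.2.2 (endpoints_eq_of_length_zero _ h0)
  have hdropone : (P.dropUntil b hbP).length = 1 := by omega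
  have hbt : G.Adj b t := adj_of_length_one (P.dropUntil b hbP) hdropone
  refine ⟨b, hbint, hcb, hbt, ?_⟩
  intro b' hb'int hcb'
  have hb'P : b' ∈ P.support := hb'int.1
  have hd' := P.length_takeUntil_add hb'P
  have hd'1 : (P.dropUntil b' hb'P).length ≠ 0 :=
    fun h0 => hb'int.2.2 (endpoints_eq_of_length_zero _ h0)
  have hmemS : (P.takeUntil b' hb'P).length ∈ S := ⟨b', hb'P, hb'int, hcb', rfl⟩
  have hsle := Nat.sInf_le hmemS
  have heq : (P.takeUntil b' hb'P).length = (P.takeUntil b hbP).length := by omega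
  have h1 := P.getVert_length_takeUntil' hb'P
  have h2 := P.getVert_length_takeUntil' hbP
  rw [heq] at h1
  exact h1.symm.trans h2

end AuxJump

/-- If there is a jump over the odd hole `w`, then `G` contains a
short jump over `w` or a local jump over `w` across one vertex. -/
theorem jump_gives_short_or_one_vertex_jump {V : Type*} [Fintype V]
    (l : ℕ) (hl : 4 ≤ l) (G : SimpleGraph V) (hG : MemGFam G l)
    {v : V} (w : G.Walk v v) (hw : IsOddHole G w)
    (hjump : ∃ (s t : V) (P : G.Walk s t), IsJump G w P) :
    ∃ (s' t' : V) (P' : G.Walk s' t'),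
      IsShortJump G w P' ∨ IsLocalJumpAcrossOne G w P' := by
  classical
  obtain ⟨hG1, hG2⟩ := hG
  have hgirth : ∀ (x : V) (cW : G.Walk x x), cW.IsCycle → 2 * l + 1 ≤ cW.length := by
    intro x cW hcyc
    have hne : G.egirth ≠ ⊤ := by
      intro h
      rw [girth, h] at hG1
      simp at hG1
    have hcoe : (G.girth : ℕ∞) = G.egirth := ENat.coe_toNat hne
    have hle : G.egirth ≤ (cW.length : ℕ∞) := le_egirth.mp (le_refl G.egirth) x cW hcyc
    rw [← hcoe, hG1] at hle
    exact_mod_cast hle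
  have hwlen : w.length < 2 * l + 3 := hG2 v w hw
  obtain ⟨hwhole, hwodd⟩ := hw
  have hSne : {n | ∃ (s t : V) (P : G.Walk s t), IsJump G w P ∧ P.length = n}.Nonempty := by
    obtain ⟨s, t, P, hP⟩ := hjump
    exact ⟨P.length, s, t, P, hP, rfl⟩
  obtain ⟨s, t, P, hP, hPlen⟩ := Nat.sInf_mem hSne
  have hmin : ∀ (s' t' : V) (J : G.Walk s' t'), IsJump G w J → P.length ≤ J.length := by
    intro s' t' J hJ
    rw [hPlen]
    exact Nat.sInf_le ⟨s', t', J, hJ, rfl⟩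
  have hP' := hP
  obtain ⟨hhole, hsw, htw, hst, hnadj, ⟨hpath, hind⟩, hint⟩ := hP
  by_cases hAtt : ∃ c, c ∈ w.support ∧ c ≠ s ∧ c ≠ t ∧ ∃ b ∈ wInterior P, G.Adj c b
  case neg =>
    refine ⟨s, t, P, Or.inl ⟨hP', ?_⟩⟩
    intro a haw has hat b hb hadj
    exact hAtt ⟨a, haw, has, hat, b, hb, hadj⟩
  case pos =>
    obtain ⟨c, hcw, hcs, hct, b0, hb0, hcb0⟩ := hAtt
    have hPrev : IsJump G w P.reverse := hP'.reverse
    have hminrev : ∀ (s' t' : V) (J : G.Walk s' t'), IsJump G w J →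
        P.reverse.length ≤ J.length := by
      intro s' t' J hJ
      rw [Walk.length_reverse]
      exact hmin _ _ _ hJ
    have hkey : ∀ c', c' ∈ w.support → c' ≠ s → c' ≠ t →
        (∃ b ∈ wInterior P, G.Adj c' b) → G.Adj c' s ∧ G.Adj c' t := by
      rintro c' hc'w hc's hc't ⟨b1, hb1, hcb1⟩
      have hadjs : G.Adj c' s := by
        by_contra hns
        obtain ⟨b, hbint, hcb, hbt, huniq⟩ :=
          minimal_jump_attach hP' hmin hc'w hc's hc't hns hb1 hcb1
        by_cases hnt : G.Adj c' t
        · exact no_triangle hgirth hl hcb hbt hnt.symm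
        · obtain ⟨b2, hb2int, hcb2, hb2s, -⟩ :=
            minimal_jump_attach hPrev hminrev hc'w hc't hc's hnt
              (mem_wInterior_reverse.mpr hb1) hcb1
          have hb2int' : b2 ∈ wInterior P := mem_wInterior_reverse.mp hb2int
          have hb2b : b2 = b := huniq b2 hb2int' hcb2
          rw [hb2b] at hb2s
          exact no_common_neighbor hgirth hl hwhole.1 hwlen hsw htw hst
            (hint b hbint) hb2s hbt
      have hadjt : G.Adj c' t := by
        by_contra hnt
        obtain ⟨b2, hb2int, hcb2, hb2s, -⟩ :=
          minimal_jump_attach hPrev hminrev hc'w hc't hc's hnt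
            (mem_wInterior_reverse.mpr hb1) hcb1
        exact no_triangle hgirth hl hcb2 hb2s hadjs.symm
      exact ⟨hadjs, hadjt⟩
    obtain ⟨hcsadj, hctadj⟩ := hkey c hcw hcs hct ⟨b0, hb0, hcb0⟩
    have huniqAtt : ∀ c', c' ∈ w.support → c' ≠ s → c' ≠ t →
        (∃ b ∈ wInterior P, G.Adj c' b) → c' = c := by
      intro c' hc'w hc's hc't hex
      by_contra hne
      obtain ⟨h1, h2⟩ := hkey c' hc'w hc's hc't hex
      exact no_square hgirth hl hcsadj.symm hctadj h2.symm h1 hst (fun h => hne h.symm)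
    have hesc : s(s, c) ∈ w.edges := hwhole.2.2 s hsw c hcw hcsadj.symm
    have hect : s(c, t) ∈ w.edges := hwhole.2.2 c hcw t htw hctadj
    obtain ⟨Q1, Q2, hp1, hp2, hinter, hedges, hsum, hsub1, hsub2⟩ :=
      cycle_split w hwhole.1 hsw htw hst
    have main : ∀ (R1 R2 : G.Walk s t), R1.IsPath → R2.IsPath →
        ({a | a ∈ R1.support} ∩ {a | a ∈ R2.support} = {s, t}) →
        ({e | e ∈ w.edges} = {e | e ∈ R1.edges} ∪ {e | e ∈ R2.edges}) →
        (∀ x ∈ R1.support, x ∈ w.support) → (∀ x ∈ R2.support, x ∈ w.support) →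
        s(s, c) ∈ R1.edges →
        ∃ (s' t' : V) (P' : G.Walk s' t'),
          IsShortJump G w P' ∨ IsLocalJumpAcrossOne G w P' := by
      intro R1 R2 hr1 hr2 hrinter hredges hrsub1 hrsub2 hq1
      have hmemE : ∀ e, e ∈ w.edges ↔ (e ∈ R1.edges ∨ e ∈ R2.edges) := by
        intro e
        rw [Set.ext_iff] at hredges
        simpa using hredges e
      have hcQ1 : c ∈ R1.support := R1.snd_mem_support_of_mem_edges hq1
      have hct1 : s(c, t) ∈ R1.edges := by
        rcases (hmemE s(c, t)).mp hect with h | h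
        · exact h
        · exfalso
          have hcQ2 : c ∈ R2.support := R2.fst_mem_support_of_mem_edges h
          have hcmem : c ∈ ({s, t} : Set V) := by
            rw [← hrinter]
            exact ⟨hcQ1, hcQ2⟩
          rcases hcmem with h' | h'
          · exact hcs h'
          · exact hct h'
      have hg1 : R1.getVert 1 = c := Walk.first_edge hr1 hq1
      have hg2 : R1.reverse.getVert 1 = c := by
        apply Walk.first_edge hr1.reverse
        rw [Walk.edges_reverse, List.mem_reverse, Sym2.eq_swap]
        exact hct1
      rw [Walk.getVert_reverse] at hg2
      have hlen1 : R1.length ≠ 0 := fun h0 => hst (Walk.endpoints_eq_of_length_zero R1 h0)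
      have h12 : (1 : ℕ) = R1.length - 1 :=
        hr1.getVert_inj (by omega) (by omega) (hg1.trans hg2.symm)
      have hR1len : R1.length = 2 := by omega
      refine ⟨s, t, P, Or.inr ⟨R1, R2,
        ⟨hP', ⟨hsw, htw, hst, hr1, hr2, hrinter, hredges⟩,
          ⟨c, ⟨hcQ1, hcs, hct⟩, b0, hb0, hcb0⟩, ?_⟩, hR1len⟩⟩
      intro a ha b hb hadj
      obtain ⟨haQ2, has, hat⟩ := ha
      have haw : a ∈ w.support := hrsub2 a haQ2
      have hac : a = c := huniqAtt a haw has hat ⟨b, hb, hadj⟩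
      subst hac
      have hcmem : a ∈ ({s, t} : Set V) := by
        rw [← hrinter]
        exact ⟨hcQ1, haQ2⟩
      rcases hcmem with h' | h'
      · exact has h'
      · exact hat h'
    rcases (by rw [Set.ext_iff] at hedges; simpa using hedges s(s, c) :
        (s(s, c) ∈ w.edges ↔ (s(s, c) ∈ Q1.edges ∨ s(s, c) ∈ Q2.edges))).mp hesc with hq | hq
    · exact main Q1 Q2 hp1 hp2 hinter hedges hsub1 hsub2 hq
    · refine main Q2 Q1 hp2 hp1 ?_ ?_ hsub2 hsub1 hq
      · rw [Set.inter_comm]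
        exact hinter
      · rw [Set.union_comm]
        exact hedges
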